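/- Let Z ⊆ ℝ be measurable with finite measure, and let (A_n)_{n∈ℕ} be measurable subsets of Z with |A_n| ≥ |Z| - 3ε for all n ≥ n₀. Define D_k = {t ∈ Z : t ∈ A_n for at least k distinct values of n in the range k ≤ n < 5k}. Then for all k ≥ n₀, |D_k| ≥ |Z| - 4ε. -/

import Mathlib

open MeasureTheory
open scoped ENNReal

/-- If `A_n ⊆ Z` are measurable with `|A_n| ≥ |Z| - 3ε` for all `n ≥ n₀`, and
`D_k = {t ∈ Z : t ∈ A_n for at least k values of n with k ≤ n < 5k}`, then
`|D_k| ≥ |Z| - 4ε` for every `k ≥ n₀`. -/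
theorem stmt7 (Z : Set ℝ) (hZ : MeasurableSet Z) (hZfin : volume Z < ⊤)
    (ε : ℝ) (hε : 0 < ε) (n₀ : ℕ) (A : ℕ → Set ℝ)
    (hAsub : ∀ n, A n ⊆ Z) (hAmeas : ∀ n, MeasurableSet (A n))
    (hAbig : ∀ n ≥ n₀, volume Z ≤ volume (A n) + ENNReal.ofReal (3 * ε))
    (k : ℕ) (hk : n₀ ≤ k) :
    volume Z ≤
      volume {t ∈ Z | k ≤ {n : ℕ | k ≤ n ∧ n < 5 * k ∧ t ∈ A n}.ncard}
        + ENNReal.ofReal (4 * ε) := by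
  classical
  set F := Finset.Ico k (5 * k) with hF
  have hFc : F.card = 4 * k := by simp [hF]; omega
  set N : ℝ → ℕ := fun t => (F.filter fun n => t ∈ A n).card with hNdef
  have hset : ∀ t, {n : ℕ | k ≤ n ∧ n < 5 * k ∧ t ∈ A n}.ncard = N t := by
    intro t
    have h : {n : ℕ | k ≤ n ∧ n < 5 * k ∧ t ∈ A n}
        = ↑(F.filter fun n => t ∈ A n) := by
      ext n; simp [hF, Finset.mem_Ico, and_assoc]
    rw [h, Set.ncard_coe_finset]
  have hNmeas : Measurable N := by
    have h : N = fun t => ∑ n ∈ F, if t ∈ A n then 1 else 0 := by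
      funext t; exact Finset.card_filter _ _
    rw [h]
    exact Finset.measurable_sum _ fun n _ =>
      Measurable.ite (hAmeas n) measurable_const measurable_const
  set S := Z ∩ {t | k ≤ N t} with hSdef
  have hSeq : {t ∈ Z | k ≤ {n : ℕ | k ≤ n ∧ n < 5 * k ∧ t ∈ A n}.ncard} = S := by
    ext t; simp [hSdef, hset, Set.mem_setOf_eq]
  rw [hSeq]
  set f : ℝ → ℝ≥0∞ := fun t => ∑ n ∈ F, (Z \ A n).indicator 1 t with hfdef
  have hfmeas : Measurable f :=
    Finset.measurable_sum _ fun n _ =>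
      (measurable_const.indicator ((hZ.diff (hAmeas n))))
  have hsum : ∫⁻ t, f t ∂volume = ∑ n ∈ F, volume (Z \ A n) := by
    simp only [hfdef]
    rw [lintegral_finset_sum (f := fun n => (Z \ A n).indicator 1) F fun n _ =>
      (measurable_const.indicator ((hZ.diff (hAmeas n))))]
    exact Finset.sum_congr rfl fun n _ => lintegral_indicator_one (hZ.diff (hAmeas n))
  have hdiff : ∀ n ≥ n₀, volume (Z \ A n) ≤ ENNReal.ofReal (3 * ε) := by
    intro n hn
    have hfin : volume (A n) ≠ ⊤ :=
      (lt_of_le_of_lt (measure_mono (hAsub n)) hZfin).ne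
    rw [measure_diff (hAsub n) (hAmeas n).nullMeasurableSet hfin]
    exact tsub_le_iff_right.2 (by simpa [add_comm] using hAbig n hn)
  have hup : ∫⁻ t, f t ∂volume ≤ ((4 * k : ℕ) : ℝ≥0∞) * ENNReal.ofReal (3 * ε) := by
    rw [hsum]
    calc ∑ n ∈ F, volume (Z \ A n) ≤ ∑ _n ∈ F, ENNReal.ofReal (3 * ε) :=
          Finset.sum_le_sum fun n hn => hdiff n
            (le_trans hk (Finset.mem_Ico.1 hn).1)
      _ = (F.card : ℝ≥0∞) * ENNReal.ofReal (3 * ε) := by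
          rw [Finset.sum_const, nsmul_eq_mul]
      _ = ((4 * k : ℕ) : ℝ≥0∞) * ENNReal.ofReal (3 * ε) := by rw [hFc]
  have hlow : ∀ t ∈ Z \ S, ((3 * k + 1 : ℕ) : ℝ≥0∞) ≤ f t := by
    intro t ht
    obtain ⟨htZ, htS⟩ := ht
    have hNt : (F.filter fun n => t ∈ A n).card < k := by
      by_contra h
      exact htS ⟨htZ, by simpa [hNdef] using not_lt.1 h⟩
    have hsplit := Finset.card_filter_add_card_filter_not
      (s := F) (p := fun n => t ∈ A n)
    rw [hFc] at hsplit
    have hge : 3 * k + 1 ≤ (F.filter fun n => ¬ t ∈ A n).card := by omega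
    have hfeq : f t = (((F.filter fun n => ¬ t ∈ A n).card : ℕ) : ℝ≥0∞) := by
      simp only [hfdef]
      rw [Finset.card_filter, Nat.cast_sum]
      refine Finset.sum_congr rfl fun n _ => ?_
      by_cases h : t ∈ A n <;> simp [Set.indicator_apply, htZ, h]
    rw [hfeq]
    exact_mod_cast hge
  have hlower : ((3 * k + 1 : ℕ) : ℝ≥0∞) * volume (Z \ S) ≤ ∫⁻ t, f t ∂volume := by
    calc ((3 * k + 1 : ℕ) : ℝ≥0∞) * volume (Z \ S)
        = ∫⁻ _t in Z \ S, ((3 * k + 1 : ℕ) : ℝ≥0∞) ∂volume := by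
          rw [setLIntegral_const, mul_comm]
      _ ≤ ∫⁻ t in Z \ S, f t ∂volume :=
          setLIntegral_mono hfmeas hlow
      _ ≤ ∫⁻ t, f t ∂volume := setLIntegral_le_lintegral _ _
  have hnum : ((4 * k : ℕ) : ℝ≥0∞) * ENNReal.ofReal (3 * ε)
      ≤ ((3 * k + 1 : ℕ) : ℝ≥0∞) * ENNReal.ofReal (4 * ε) := by
    have h3 : ENNReal.ofReal (3 * ε) = 3 * ENNReal.ofReal ε := by
      rw [ENNReal.ofReal_mul (by norm_num)]; norm_num
    have h4 : ENNReal.ofReal (4 * ε) = 4 * ENNReal.ofReal ε := by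
      rw [ENNReal.ofReal_mul (by norm_num)]; norm_num
    rw [h3, h4, ← mul_assoc, ← mul_assoc]
    refine mul_le_mul_left ?_ _
    calc ((4 * k : ℕ) : ℝ≥0∞) * 3 = ((4 * k * 3 : ℕ) : ℝ≥0∞) := by push_cast; ring
      _ ≤ (((3 * k + 1) * 4 : ℕ) : ℝ≥0∞) := Nat.cast_le.2 (by omega)
      _ = ((3 * k + 1 : ℕ) : ℝ≥0∞) * 4 := by push_cast; ring
  have hvol : volume (Z \ S) ≤ ENNReal.ofReal (4 * ε) := by
    have hne : ((3 * k + 1 : ℕ) : ℝ≥0∞) ≠ 0 := Nat.cast_ne_zero.2 (by omega)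
    have htop : ((3 * k + 1 : ℕ) : ℝ≥0∞) ≠ ⊤ := ENNReal.natCast_ne_top _
    exact (ENNReal.mul_le_mul_iff_right hne htop).1 ((hlower.trans hup).trans hnum)
  calc volume Z ≤ volume (S ∪ (Z \ S)) := by
        refine measure_mono fun t ht => ?_
        by_cases h : t ∈ S
        · exact Or.inl h
        · exact Or.inr ⟨ht, h⟩
    _ ≤ volume S + volume (Z \ S) := measure_union_le _ _
    _ ≤ volume S + ENNReal.ofReal (4 * ε) := add_le_add_right hvol _
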